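/- Let H be a Hilbert space, let S be a bounded self-adjoint operator on H, and let X ⊂ H be a dense linear subspace with S(X) ⊂ X. Suppose ‖·‖_X is a norm on X such that (X, ‖·‖_X) is complete and continuously embedded in H. Then: (i) the restriction A := S|_X is a bounded operator on (X, ‖·‖_X); and (ii) if in addition the approximate point spectrum of A satisfies σ_ap(A) ⊂ σ(S), then σ(A) = σ(S). -/

import Mathlib

open Filter

noncomputable section


/-- The approximate point spectrum of a bounded operator `T` on a Banach space `X`:
those `z ∈ ℂ` for which there is a sequence of unit vectors `u n` with
`‖(T - z) u n‖ → 0`. -/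
def approxPtSpectrum {X : Type*} [NormedAddCommGroup X] [NormedSpace ℂ X]
    (T : X →L[ℂ] X) : Set ℂ :=
  { z : ℂ | ∃ u : ℕ → X, (∀ n, ‖u n‖ = 1) ∧
      Tendsto (fun n => ‖T (u n) - z • u n‖) atTop (nhds 0) }

lemma aux_frontier_subset_approx
    {X : Type*} [NormedAddCommGroup X] [NormedSpace ℂ X] [CompleteSpace X]
    (A : X →L[ℂ] X) {z : ℂ} (hz : z ∈ frontier (spectrum ℂ A)) :
    z ∈ approxPtSpectrum A := by
  rw [frontier_eq_closure_inter_closure] at hz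
  obtain ⟨hz1, hz2⟩ := hz
  rw [(spectrum.isClosed (𝕜 := ℂ) A).closure_eq] at hz1
  have key : ∀ n : ℕ, ∃ u : X, ‖u‖ = 1 ∧ ‖A u - z • u‖ ≤ 3 / (n + 1) := by
    intro n
    have hn : (0:ℝ) < 1 / (n+1) := by positivity
    obtain ⟨w, hw, hwd⟩ := Metric.mem_closure_iff.mp hz2 _ hn
    have hwρ : IsUnit (algebraMap ℂ (X →L[ℂ] X) w - A) := by
      simpa [spectrum, resolventSet] using hw
    set u : (X →L[ℂ] X)ˣ := hwρ.unit with hu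
    have huv : (↑u : X →L[ℂ] X) = algebraMap ℂ (X →L[ℂ] X) w - A := hwρ.unit_spec
    set R : X →L[ℂ] X := ↑u⁻¹ with hR
    have hdist : dist z w = ‖z - w‖ := dist_eq_norm z w
    -- ‖R‖⁻¹ ≤ ‖z - w‖, since otherwise z would be in the resolvent set
    have hlow : ‖R‖⁻¹ ≤ ‖z - w‖ := by
      by_contra hc
      push_neg at hc
      have : IsUnit (algebraMap ℂ (X →L[ℂ] X) z - A) := by
        have hle : ‖algebraMap ℂ (X →L[ℂ] X) (z - w)‖ ≤ ‖z - w‖ := by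
          rw [Algebra.algebraMap_eq_smul_one, norm_smul]
          have h1 : ‖(1 : X →L[ℂ] X)‖ ≤ 1 := by
            simpa [ContinuousLinearMap.one_def] using ContinuousLinearMap.norm_id_le (E := X)
          nlinarith [norm_nonneg (z - w)]
        have hnear : ‖(algebraMap ℂ (X →L[ℂ] X) z - A) - ↑u‖ < ‖(↑u⁻¹ : X →L[ℂ] X)‖⁻¹ := by
          rw [huv]
          have h1 : (algebraMap ℂ (X →L[ℂ] X) z - A) - (algebraMap ℂ (X →L[ℂ] X) w - A)
              = algebraMap ℂ (X →L[ℂ] X) (z - w) := by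
            rw [map_sub]; abel
          rw [h1]
          exact lt_of_le_of_lt hle hc
        exact (u.ofNearby _ hnear).isUnit
      rw [spectrum.mem_iff] at hz1
      exact hz1 this
    have hzw : ‖z - w‖ < 1 / (n+1) := by rwa [hdist] at hwd
    have hRpos : 0 < ‖R‖ := by
      rcases (norm_nonneg R).lt_or_eq with h | h
      · exact h
      · exfalso
        have hR0 : R = 0 := norm_eq_zero.mp h.symm
        have h10 : (1 : X →L[ℂ] X) = 0 := by
          have := u.mul_inv
          rw [← hR] at this
          rw [hR0, mul_zero] at this
          exact this.symm
        have : Subsingleton (X →L[ℂ] X) := subsingleton_of_zero_eq_one h10.symm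
        rw [spectrum.mem_iff] at hz1
        exact hz1 (isUnit_of_subsingleton _)
    have hRn : (n+1 : ℝ) < ‖R‖ := by
      have h2 : ‖R‖⁻¹ < 1/(n+1) := lt_of_le_of_lt hlow hzw
      have := inv_strictAnti₀ (inv_pos.mpr hRpos) h2
      rwa [one_div, inv_inv, inv_inv] at this
    obtain ⟨v, hv1, hv2⟩ := R.exists_lt_apply_of_lt_opNorm (r := ‖R‖/2) (by linarith)
    have hRvpos : 0 < ‖R v‖ := lt_trans (by linarith) hv2
    have hRvne : R v ≠ 0 := by
      intro hc; rw [hc, norm_zero] at hRvpos; exact lt_irrefl _ hRvpos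
    refine ⟨((‖R v‖⁻¹ : ℝ) : ℂ) • R v, ?_, ?_⟩
    · rw [norm_smul]
      simp [abs_of_pos (inv_pos.mpr hRvpos), inv_mul_cancel₀ (ne_of_gt hRvpos)]
    · have hAR : (algebraMap ℂ (X →L[ℂ] X) w - A) (R v) = v := by
        have := congrArg (fun (T : X →L[ℂ] X) => T v) u.mul_inv
        simp only [← hR, ← huv] at this ⊢
        simpa [ContinuousLinearMap.mul_apply] using this
      have hARv : A (R v) = w • R v - v := by
        have h1 : w • R v - A (R v) = v := by
          simpa [ContinuousLinearMap.sub_apply, Algebra.algebraMap_eq_smul_one,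
            ContinuousLinearMap.smul_apply, ContinuousLinearMap.one_apply] using hAR
        linear_combination (norm := module) -h1
      have heq : A (((‖R v‖⁻¹ : ℝ) : ℂ) • R v) - z • (((‖R v‖⁻¹ : ℝ) : ℂ) • R v)
          = (w - z) • (((‖R v‖⁻¹ : ℝ) : ℂ) • R v) - ((‖R v‖⁻¹ : ℝ) : ℂ) • v := by
        rw [map_smul, hARv]
        module
      rw [heq]
      have hnorm1 : ‖(((‖R v‖⁻¹ : ℝ) : ℂ) • R v)‖ = 1 := by
        rw [norm_smul]
        simp [abs_of_pos (inv_pos.mpr hRvpos), inv_mul_cancel₀ (ne_of_gt hRvpos)]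
      have hb1 : ‖(w - z) • (((‖R v‖⁻¹ : ℝ) : ℂ) • R v)‖ ≤ 1/(n+1) := by
        rw [norm_smul, hnorm1, mul_one]
        rw [← norm_neg]
        simpa [norm_sub_rev] using le_of_lt hzw
      have hb2 : ‖((‖R v‖⁻¹ : ℝ) : ℂ) • v‖ ≤ 2/(n+1) := by
        rw [norm_smul]
        have h1 : ‖(((‖R v‖⁻¹ : ℝ)) : ℂ)‖ = ‖R v‖⁻¹ := by
          simp [abs_of_pos (inv_pos.mpr hRvpos)]
        rw [h1]
        have h2 : ‖R v‖⁻¹ ≤ 2/‖R‖ := by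
          rw [div_eq_mul_inv]
          have := inv_anti₀ (by linarith : (0:ℝ) < ‖R‖/2) (le_of_lt hv2)
          calc ‖R v‖⁻¹ ≤ (‖R‖/2)⁻¹ := this
            _ = 2 * ‖R‖⁻¹ := by field_simp
        have h3 : (2:ℝ)/‖R‖ ≤ 2/(n+1) := by
          apply div_le_div_of_nonneg_left (by norm_num) (by positivity) (le_of_lt hRn)
        have h4 : ‖v‖ ≤ 1 := le_of_lt hv1
        calc ‖R v‖⁻¹ * ‖v‖ ≤ (2/(n+1)) * 1 := by
              apply mul_le_mul (le_trans h2 h3) h4 (norm_nonneg _) (by positivity)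
          _ = 2/(n+1) := mul_one _
      calc ‖(w - z) • (((‖R v‖⁻¹ : ℝ) : ℂ) • R v) - ((‖R v‖⁻¹ : ℝ) : ℂ) • v‖
          ≤ ‖(w - z) • (((‖R v‖⁻¹ : ℝ) : ℂ) • R v)‖ + ‖((‖R v‖⁻¹ : ℝ) : ℂ) • v‖ :=
            norm_sub_le _ _
        _ ≤ 1/(n+1) + 2/(n+1) := add_le_add hb1 hb2
        _ = 3/(n+1) := by ring
  choose uu h1 h2 using key
  refine ⟨uu, h1, ?_⟩
  apply squeeze_zero (fun n => norm_nonneg _) h2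
  have := tendsto_const_div_atTop_nhds_zero_nat (3:ℝ)
  have h3 : Tendsto (fun n : ℕ => (n:ℝ) + 1) atTop atTop :=
    tendsto_atTop_add_const_right _ _ tendsto_natCast_atTop_atTop
  have h := (tendsto_const_div_atTop_nhds_zero_nat (3:ℝ)).comp (tendsto_add_atTop_nat 1)
  have heq : (fun n : ℕ => (3:ℝ) / (n + 1)) = (fun n : ℕ => (3:ℝ) / n) ∘ (fun n => n + 1) := by
    funext n; simp only [Function.comp]; push_cast; ring_nf
  rw [heq]; exact h


lemma aux_halfplane {K U : Set ℂ} (hKc : IsClosed K) (hU : IsOpen U) (hUconv : Convex ℝ U)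
    (hfrU : ∀ w ∈ frontier K, w ∉ U) (w₀ : ℂ) (hw₀U : w₀ ∈ U) (hw₀K : w₀ ∉ K) :
    ∀ z ∈ U, z ∉ K := by
  intro z hzU hzK
  have hKint : ∀ w ∈ U, w ∈ K → w ∈ interior K := by
    intro w hwU hwK
    by_contra hc
    exact hfrU w (by rw [hKc.frontier_eq]; exact ⟨hwK, hc⟩) hwU
  have hsub : U ⊆ interior K ∪ Kᶜ := by
    intro w hw
    by_cases h : w ∈ K
    · exact Or.inl (hKint w hw h)
    · exact Or.inr h
  obtain ⟨p, hpU, hpint, hpc⟩ :=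
    hUconv.isPreconnected (interior K) Kᶜ isOpen_interior hKc.isOpen_compl hsub
      ⟨z, hzU, hKint z hzU hzK⟩ ⟨w₀, hw₀U, hw₀K⟩
  exact hpc (interior_subset hpint)

lemma aux_spectrum_real {K : Set ℂ} (hKc : IsClosed K) (hKb : Bornology.IsBounded K)
    (hfr : ∀ w ∈ frontier K, w.im = 0) : ∀ z ∈ K, z.im = 0 := by
  intro z hz
  by_contra him
  obtain ⟨r, hr⟩ := hKb.subset_closedBall 0
  set ρ : ℝ := max r 0 + 1 with hρ
  have hρpos : 0 < ρ := by positivity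
  have hρr : r < ρ := lt_of_le_of_lt (le_max_left r 0) (by simp [hρ])
  rcases lt_or_gt_of_ne him with hneg | hpos
  · -- im z < 0, use lower half-plane
    have := aux_halfplane (U := {w : ℂ | w.im < 0}) hKc
      (isOpen_lt Complex.continuous_im continuous_const)
      (convex_halfSpace_im_lt 0)
      (fun w hw hwU => by simp only [Set.mem_setOf_eq, hfr w hw] at hwU; exact lt_irrefl 0 hwU)
      (-(Complex.I * ρ))
      (by simp [Complex.mul_im, hρpos])
      (by
        intro hc
        have := hr hc
        rw [Metric.mem_closedBall, dist_zero_right] at this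
        rw [norm_neg] at this
        have h2 : ‖Complex.I * (ρ:ℂ)‖ = ρ := by
          rw [norm_mul, Complex.norm_I, one_mul, Complex.norm_real]
          exact abs_of_pos hρpos
        rw [h2] at this
        linarith)
    exact this z hneg hz
  · have := aux_halfplane (U := {w : ℂ | 0 < w.im}) hKc
      (isOpen_lt continuous_const Complex.continuous_im)
      (convex_halfSpace_im_gt 0)
      (fun w hw hwU => by simp only [Set.mem_setOf_eq, hfr w hw] at hwU; exact lt_irrefl 0 hwU)
      (Complex.I * ρ)
      (by simp [Complex.mul_im, hρpos])
      (by
        intro hc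
        have := hr hc
        rw [Metric.mem_closedBall, dist_zero_right] at this
        have h2 : ‖Complex.I * (ρ:ℂ)‖ = ρ := by
          rw [norm_mul, Complex.norm_I, one_mul, Complex.norm_real]
          exact abs_of_pos hρpos
        rw [h2] at this
        linarith)
    exact this z hpos hz


set_option maxHeartbeats 1600000 in
lemma aux_S_subset_A
    {H : Type*} [NormedAddCommGroup H] [InnerProductSpace ℂ H] [CompleteSpace H]
    {X : Type*} [NormedAddCommGroup X] [NormedSpace ℂ X] [CompleteSpace X]
    (ι : X →L[ℂ] H) (hdense : DenseRange ι)
    (S : H →L[ℂ] H) (hS : IsSelfAdjoint S)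
    (A : X →L[ℂ] X) (hA : ∀ x : X, ι (A x) = S (ι x)) :
    spectrum ℂ S ⊆ spectrum ℂ A := by
  intro z₀ hz₀
  by_contra hz₀A
  haveI : IsStarNormal S := hS.isStarNormal
  -- pick δ such that the ball of radius 3δ around z₀ misses σ(A)
  obtain ⟨ε, hεpos, hballε⟩ :=
    Metric.isOpen_iff.mp (spectrum.isClosed (𝕜 := ℂ) A).isOpen_compl z₀ hz₀A
  set δ : ℝ := ε/3 with hδdef
  have hδpos : 0 < δ := by positivity
  have hball3 : ∀ w : ℂ, ‖w - z₀‖ < 3*δ → w ∈ resolventSet ℂ A := by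
    intro w hw
    have h1 : w ∈ (spectrum ℂ A)ᶜ := by
      apply hballε
      rw [Metric.mem_ball, dist_eq_norm]
      rw [hδdef] at hw; linarith
    simpa [spectrum, Set.not_notMem] using h1
  -- the bump function θ
  set θ : ℂ → ℂ := fun t => ((max 0 (1 - ‖t - z₀‖/δ) : ℝ) : ℂ) with hθdef
  have hθcont : Continuous θ :=
    Complex.continuous_ofReal.comp
      (continuous_const.max
        (continuous_const.sub (((continuous_id.sub continuous_const).norm).div_const δ)))
  have hθ0 : ∀ t : ℂ, δ ≤ ‖t - z₀‖ → θ t = 0 := by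
    intro t ht
    have h1 : 1 - ‖t - z₀‖/δ ≤ 0 := by
      rw [sub_nonpos]
      rw [le_div_iff₀ hδpos]
      linarith
    simp only [hθdef]
    rw [max_eq_left h1, Complex.ofReal_zero]
  have hθne : ∀ t : ℂ, θ t ≠ 0 → ‖t - z₀‖ < δ := by
    intro t ht
    by_contra hc
    push_neg at hc
    exact ht (hθ0 t hc)
  have hθnorm : ∀ t : ℂ, ‖θ t‖ ≤ 1 := by
    intro t
    simp only [hθdef, Complex.norm_real, Real.norm_eq_abs]
    rw [abs_of_nonneg (le_max_left (0:ℝ) _)]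
    apply max_le (by norm_num)
    have : 0 ≤ ‖t - z₀‖/δ := by positivity
    linarith
  have hθz₀ : θ z₀ = 1 := by simp [hθdef, hδpos.le]
  -- the family M, with powers for derivative purposes
  have hcontk : ∀ z : ℂ, δ < ‖z - z₀‖ → ∀ k : ℕ,
      Continuous (fun t : ℂ => θ t * ((z - t)⁻¹)^k) := by
    intro z hz k
    rw [continuous_iff_continuousAt]
    intro t
    by_cases ht : t = z
    · have hopen : IsOpen {s : ℂ | δ < ‖s - z₀‖} :=
        isOpen_lt continuous_const ((continuous_id.sub continuous_const).norm)
      have hev : (fun s : ℂ => θ s * ((z - s)⁻¹)^k) =ᶠ[nhds t] (fun _ => 0) := by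
        filter_upwards [hopen.mem_nhds (by rw [ht]; exact hz)] with s hs
        rw [hθ0 s (le_of_lt hs)]
        simp
      exact ContinuousAt.congr continuousAt_const hev.symm
    · have h1 : z - t ≠ 0 := sub_ne_zero_of_ne (Ne.symm ht)
      exact (hθcont.continuousAt).mul
        (((((continuous_const.sub continuous_id).continuousAt).inv₀ h1)).pow k)
  set M : ℂ → ℂ → ℂ := fun z t => θ t * (z - t)⁻¹ with hMdef
  have hMcont : ∀ z : ℂ, δ < ‖z - z₀‖ → Continuous (M z) := by
    intro z hz
    have := hcontk z hz 1
    simpa [hMdef, pow_one] using this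
  have hMbound : ∀ z : ℂ, δ < ‖z - z₀‖ → ∀ t : ℂ, ‖M z t‖ ≤ (‖z - z₀‖ - δ)⁻¹ := by
    intro z hz t
    have hpos : 0 < ‖z - z₀‖ - δ := by linarith
    by_cases ht : θ t = 0
    · rw [hMdef]; simp only [ht, zero_mul, norm_zero]
      positivity
    · have h1 : ‖t - z₀‖ < δ := hθne t ht
      have h2 : ‖z - z₀‖ - δ ≤ ‖z - t‖ := by
        have := norm_sub_norm_le (z - z₀) (t - z₀)
        have heq : (z - z₀) - (t - z₀) = z - t := by ring
        rw [heq] at this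
        linarith
      rw [hMdef]
      simp only [norm_mul, norm_inv]
      calc ‖θ t‖ * ‖z - t‖⁻¹ ≤ 1 * (‖z - z₀‖ - δ)⁻¹ := by
            apply mul_le_mul (hθnorm t) _ (by positivity) (by norm_num)
            exact inv_anti₀ hpos h2
        _ = (‖z - z₀‖ - δ)⁻¹ := one_mul _
  -- key identity relating cfc (M z) S and the resolvent of A
  have hkey : ∀ z : ℂ, δ < ‖z - z₀‖ → z ∈ resolventSet ℂ A → ∀ x : X,
      cfc (M z) S (ι x) = cfc θ S (ι (resolvent A z x)) := by
    intro z hzδ hz x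
    have hzu : IsUnit (algebraMap ℂ (X →L[ℂ] X) z - A) := hz
    set y := resolvent A z x with hy
    have h1 : (algebraMap ℂ (X →L[ℂ] X) z - A) y = x := by
      have := congrArg (fun T : X →L[ℂ] X => T x) (Ring.mul_inverse_cancel _ hzu)
      simpa [hy, resolvent, ContinuousLinearMap.mul_apply] using this
    have h2 : ι x = (algebraMap ℂ (H →L[ℂ] H) z - S) (ι y) := by
      rw [← h1]
      simp only [ContinuousLinearMap.sub_apply, Algebra.algebraMap_eq_smul_one,
        ContinuousLinearMap.smul_apply, ContinuousLinearMap.one_apply, map_sub, map_smul, hA]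
    have h3 : cfc (fun t : ℂ => z - t) S = algebraMap ℂ (H →L[ℂ] H) z - S := by
      rw [cfc_sub (fun _ => z) (fun t : ℂ => t) S continuousOn_const
        (continuous_id.continuousOn), cfc_const z S, cfc_id' ℂ S]
    have h4 : cfc (M z) S * cfc (fun t : ℂ => z - t) S = cfc θ S := by
      rw [← cfc_mul (M z) (fun t : ℂ => z - t) S (hMcont z hzδ).continuousOn
        ((continuous_const.sub continuous_id).continuousOn)]
      congr 1
      funext t
      by_cases ht : t = z
      · rw [ht]
        simp only [hMdef, sub_self, mul_zero]
        exact (hθ0 z (le_of_lt hzδ)).symm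
      · have hne : z - t ≠ 0 := sub_ne_zero_of_ne (Ne.symm ht)
        rw [hMdef]
        field_simp
    calc cfc (M z) S (ι x) = cfc (M z) S ((algebraMap ℂ (H →L[ℂ] H) z - S) (ι y)) := by
          rw [← h2]
      _ = (cfc (M z) S * cfc (fun t : ℂ => z - t) S) (ι y) := by
          rw [h3]; rfl
      _ = cfc θ S (ι y) := by rw [h4]
  -- differentiability of the "outer" branch
  have hχdiff : ∀ x : X, ∀ z : ℂ, δ < ‖z - z₀‖ →
      HasDerivAt (fun w : ℂ => cfc (M w) S (ι x))
        (cfc (fun t : ℂ => -(θ t * ((z - t)⁻¹)^2)) S (ι x)) z := by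
    intro x z hzδ
    set c : ℝ := ‖z - z₀‖ - δ with hcdef
    have hcpos : 0 < c := by rw [hcdef]; linarith
    set N : ℂ → ℂ := fun t : ℂ => -(θ t * ((z - t)⁻¹)^2) with hNdef
    have hNcont : Continuous N := by
      have := (hcontk z hzδ 2).neg
      exact this
    rw [hasDerivAt_iff_isLittleO, Asymptotics.isLittleO_iff]
    intro ε' hε'
    set K : ℝ := 2 / c^3 * ‖ι x‖ + 1 with hKdef
    have hKpos : (0:ℝ) < K := by rw [hKdef]; positivity
    have hrad : (0:ℝ) < min (c/2) (ε' / K) := by positivity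
    filter_upwards [Metric.ball_mem_nhds z hrad] with w hw
    rw [Metric.mem_ball, dist_eq_norm] at hw
    have hh1 : ‖w - z‖ < c/2 := lt_of_lt_of_le hw (min_le_left _ _)
    have hh2 : ‖w - z‖ ≤ ε' / K := le_of_lt (lt_of_lt_of_le hw (min_le_right _ _))
    have hwz₀ : δ < ‖w - z₀‖ := by
      have h1 := norm_sub_norm_le (z - z₀) (z - w)
      have heq : (z - z₀) - (z - w) = w - z₀ := by ring
      rw [heq, norm_sub_rev z w] at h1
      have : δ + c ≤ ‖z - z₀‖ := by rw [hcdef]; linarith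
      linarith
    set G : ℂ → ℂ := fun t : ℂ => M w t - M z t - (w - z) * N t with hGdef
    have hcomb : cfc (M w) S (ι x) - cfc (M z) S (ι x) - (w - z) • (cfc N S (ι x))
        = cfc G S (ι x) := by
      have c1 : ContinuousOn (fun t : ℂ => M w t - M z t) (spectrum ℂ S) :=
        ((hMcont w hwz₀).sub (hMcont z hzδ)).continuousOn
      have c2 : ContinuousOn (fun t : ℂ => (w - z) * N t) (spectrum ℂ S) :=
        (continuous_const.mul hNcont).continuousOn
      have e0 : cfc G S = cfc (M w) S - cfc (M z) S - (w - z) • cfc N S := by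
        calc cfc G S
            = cfc (fun t : ℂ => M w t - M z t) S - cfc (fun t : ℂ => (w - z) * N t) S :=
              cfc_sub _ _ S c1 c2
          _ = (cfc (M w) S - cfc (M z) S) - (w - z) • cfc N S := by
              rw [cfc_sub _ _ S (hMcont w hwz₀).continuousOn (hMcont z hzδ).continuousOn,
                cfc_const_mul (w - z) N S hNcont.continuousOn]
      rw [e0]
      simp [ContinuousLinearMap.sub_apply, ContinuousLinearMap.smul_apply]
    have hpt : ∀ t : ℂ, ‖G t‖ ≤ 2 / c^3 * ‖w - z‖^2 := by
      intro t
      by_cases ht : θ t = 0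
      · have : G t = 0 := by simp [hGdef, hMdef, hNdef, ht]
        rw [this, norm_zero]
        positivity
      · have h1 : ‖t - z₀‖ < δ := hθne t ht
        have hzt : c ≤ ‖z - t‖ := by
          have h2 := norm_sub_norm_le (z - z₀) (t - z₀)
          have heq : (z - z₀) - (t - z₀) = z - t := by ring
          rw [heq] at h2
          rw [hcdef]; linarith
        have hztne : z - t ≠ 0 := by
          intro hc; rw [hc, norm_zero] at hzt; linarith
        have hwt : c/2 ≤ ‖w - t‖ := by
          have h2 := norm_sub_norm_le (z - t) (z - w)
          have heq : (z - t) - (z - w) = w - t := by ring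
          rw [heq, norm_sub_rev z w] at h2
          linarith
        have hwtne : w - t ≠ 0 := by
          intro hc; rw [hc, norm_zero] at hwt; linarith
        have hident : G t = θ t * ((w - z)^2 * ((z - t)⁻¹)^2 * (w - t)⁻¹) := by
          simp only [hGdef, hMdef, hNdef]
          field_simp
          ring
        rw [hident, norm_mul, norm_mul, norm_mul, norm_pow, norm_pow, norm_inv, norm_inv]
        have b1 : ‖z - t‖⁻¹ ≤ c⁻¹ := inv_anti₀ hcpos hzt
        have b2 : ‖w - t‖⁻¹ ≤ (c/2)⁻¹ := inv_anti₀ (by positivity) hwt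
        have b3 : (‖z - t‖⁻¹)^2 ≤ (c⁻¹)^2 := by
          apply pow_le_pow_left₀ (by positivity) b1
        calc ‖θ t‖ * (‖w - z‖^2 * (‖z - t‖⁻¹)^2 * ‖w - t‖⁻¹)
            ≤ 1 * (‖w - z‖^2 * (c⁻¹)^2 * (c/2)⁻¹) := by
              apply mul_le_mul (hθnorm t) _ (by positivity) (by norm_num)
              apply mul_le_mul _ b2 (by positivity) (by positivity)
              apply mul_le_mul_of_nonneg_left b3 (by positivity)
          _ = 2 / c^3 * ‖w - z‖^2 := by
              field_simp
    calc ‖cfc (M w) S (ι x) - cfc (M z) S (ι x) - (w - z) • cfc N S (ι x)‖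
        = ‖cfc G S (ι x)‖ := by rw [hcomb]
      _ ≤ ‖cfc G S‖ * ‖ι x‖ := (cfc G S).le_opNorm (ι x)
      _ ≤ (2 / c^3 * ‖w - z‖^2) * ‖ι x‖ := by
          apply mul_le_mul_of_nonneg_right _ (norm_nonneg _)
          exact norm_cfc_le (by positivity) (fun t _ => hpt t)
      _ ≤ ε' * ‖w - z‖ := by
          have e : 2 / c^3 * ‖w - z‖^2 * ‖ι x‖ = (2 / c^3 * ‖ι x‖) * ‖w - z‖ * ‖w - z‖ := by
            ring
          rw [e]
          have b1 : (2 / c^3 * ‖ι x‖) * ‖w - z‖ ≤ K * (ε' / K) := by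
            apply mul_le_mul _ hh2 (norm_nonneg _) (le_of_lt hKpos)
            rw [hKdef]; linarith
          have b2 : K * (ε' / K) = ε' := by
            rw [mul_comm, div_mul_cancel₀ _ (ne_of_gt hKpos)]
          calc (2 / c^3 * ‖ι x‖) * ‖w - z‖ * ‖w - z‖
              ≤ (K * (ε' / K)) * ‖w - z‖ := mul_le_mul_of_nonneg_right b1 (norm_nonneg _)
            _ = ε' * ‖w - z‖ := by rw [b2]
  -- differentiability of the "inner" branch
  have hψdiff : ∀ x : X, ∀ z : ℂ, z ∈ resolventSet ℂ A →
      DifferentiableAt ℂ (fun w : ℂ => cfc θ S (ι (resolvent A w x))) z := by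
    intro x z hz
    have h1 := spectrum.hasDerivAt_resolvent (a := A) (k := z) hz
    set T : (X →L[ℂ] X) →L[ℂ] H :=
      ((cfc θ S).comp ι).comp (ContinuousLinearMap.apply ℂ X x) with hT
    have h2 : (fun w : ℂ => cfc θ S (ι (resolvent A w x))) = fun w => T (resolvent A w) := by
      funext w
      simp [hT]
    rw [h2]
    exact (T.differentiable.differentiableAt).comp z h1.differentiableAt
  -- the glued entire function
  set F : X → ℂ → H := fun x z =>
    if δ < ‖z - z₀‖ then cfc (M z) S (ι x) else cfc θ S (ι (resolvent A z x)) with hFdef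
  have hopen : IsOpen {s : ℂ | δ < ‖s - z₀‖} :=
    isOpen_lt continuous_const ((continuous_id.sub continuous_const).norm)
  have hFdiff : ∀ x : X, Differentiable ℂ (F x) := by
    intro x z
    by_cases hz : δ < ‖z - z₀‖
    · have hev : F x =ᶠ[nhds z] (fun w => cfc (M w) S (ι x)) := by
        filter_upwards [hopen.mem_nhds hz] with s hs
        simp only [hFdef, if_pos hs]
      exact (hev.differentiableAt_iff).mpr ((hχdiff x z hz).differentiableAt)
    · push_neg at hz
      have hzρ : z ∈ resolventSet ℂ A := hball3 z (by linarith)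
      have hev : F x =ᶠ[nhds z] (fun w => cfc θ S (ι (resolvent A w x))) := by
        filter_upwards [Metric.ball_mem_nhds z hδpos] with s hs
        rw [Metric.mem_ball, dist_eq_norm] at hs
        by_cases h2 : δ < ‖s - z₀‖
        · have hsz₀ : ‖s - z₀‖ < 3*δ := by
            have h3 := norm_add_le (s - z) (z - z₀)
            have heq : (s - z) + (z - z₀) = s - z₀ := by ring
            rw [heq] at h3
            linarith
          simp only [hFdef, if_pos h2]
          exact hkey s h2 (hball3 s hsz₀) x
        · simp only [hFdef, if_neg h2]
      exact (hev.differentiableAt_iff).mpr (hψdiff x z hzρ)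
  have hFbound : ∀ x : X, ∀ z : ℂ, δ < ‖z - z₀‖ → ‖F x z‖ ≤ (‖z - z₀‖ - δ)⁻¹ * ‖ι x‖ := by
    intro x z hz
    simp only [hFdef, if_pos hz]
    calc ‖cfc (M z) S (ι x)‖ ≤ ‖cfc (M z) S‖ * ‖ι x‖ := (cfc (M z) S).le_opNorm (ι x)
      _ ≤ (‖z - z₀‖ - δ)⁻¹ * ‖ι x‖ := by
          apply mul_le_mul_of_nonneg_right _ (norm_nonneg _)
          exact norm_cfc_le (by simp only [inv_nonneg]; linarith) (fun t _ => hMbound z hz t)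
  have hFzero : ∀ x : X, F x z₀ = 0 := by
    intro x
    have hb : Bornology.IsBounded (Set.range (F x)) := by
      have hsub : Set.range (F x) ⊆
          (F x '' Metric.closedBall z₀ (δ + 1)) ∪ Metric.closedBall 0 ‖ι x‖ := by
        rintro _ ⟨z, rfl⟩
        by_cases hz : ‖z - z₀‖ ≤ δ + 1
        · exact Or.inl ⟨z, by rw [Metric.mem_closedBall, dist_eq_norm]; exact hz, rfl⟩
        · push_neg at hz
          refine Or.inr ?_
          rw [Metric.mem_closedBall, dist_zero_right]
          have h1 : δ < ‖z - z₀‖ := by linarith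
          have h2 : (‖z - z₀‖ - δ)⁻¹ ≤ 1 := by
            rw [inv_le_one_iff₀]
            right; linarith
          calc ‖F x z‖ ≤ (‖z - z₀‖ - δ)⁻¹ * ‖ι x‖ := hFbound x z h1
            _ ≤ 1 * ‖ι x‖ := mul_le_mul_of_nonneg_right h2 (norm_nonneg _)
            _ = ‖ι x‖ := one_mul _
      exact Bornology.IsBounded.subset
        ((((isCompact_closedBall z₀ (δ + 1)).image (hFdiff x).continuous).isBounded).union
          Metric.isBounded_closedBall) hsub
    have hconst := (hFdiff x).apply_eq_apply_of_bounded hb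
    have hlim : ∀ n : ℕ, ‖F x z₀‖ ≤ ((n:ℝ) + 1)⁻¹ * ‖ι x‖ := by
      intro n
      have hnorm : ‖(z₀ + ((δ + 1 + n : ℝ) : ℂ)) - z₀‖ = δ + 1 + n := by
        have h1 : (z₀ + ((δ + 1 + n : ℝ) : ℂ)) - z₀ = ((δ + 1 + n : ℝ) : ℂ) := by ring
        rw [h1, Complex.norm_real, Real.norm_eq_abs, abs_of_pos (by positivity)]
      have hgt : δ < ‖(z₀ + ((δ + 1 + n : ℝ) : ℂ)) - z₀‖ := by
        rw [hnorm]
        have := Nat.cast_nonneg (α := ℝ) n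
        linarith
      have h2 := hFbound x (z₀ + ((δ + 1 + n : ℝ) : ℂ)) hgt
      rw [hnorm] at h2
      have h3 : ‖(z₀ + ((δ + 1 + n : ℝ) : ℂ)) - z₀‖ - δ = (n:ℝ) + 1 := by
        rw [hnorm]; ring
      rw [hconst z₀ (z₀ + ((δ + 1 + n : ℝ) : ℂ))]
      have h4 : (δ + 1 + (n:ℝ)) - δ = (n:ℝ) + 1 := by ring
      rw [h4] at h2
      exact h2
    have htend : Tendsto (fun n : ℕ => ((n:ℝ) + 1)⁻¹ * ‖ι x‖) atTop (nhds 0) := by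
      have h1 : Tendsto (fun n : ℕ => ((n:ℝ) + 1)⁻¹) atTop (nhds 0) :=
        tendsto_one_div_add_atTop_nhds_zero_nat.congr (fun n => by rw [one_div])
      simpa using h1.mul_const ‖ι x‖
    have h5 : ‖F x z₀‖ ≤ 0 := ge_of_tendsto' htend (fun n => hlim n)
    exact norm_le_zero_iff.mp h5
  -- θ(S) vanishes on the range of ι
  have hθSι : ∀ y : X, cfc θ S (ι y) = 0 := by
    intro y
    have hz₀ρ : z₀ ∈ resolventSet ℂ A := by
      apply hball3
      simp only [sub_self, norm_zero]
      positivity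
    have hzu : IsUnit (algebraMap ℂ (X →L[ℂ] X) z₀ - A) := hz₀ρ
    set x : X := (algebraMap ℂ (X →L[ℂ] X) z₀ - A) y with hx
    have h1 : resolvent A z₀ x = y := by
      have := congrArg (fun T : X →L[ℂ] X => T y) (Ring.inverse_mul_cancel _ hzu)
      simpa [resolvent, hx, ContinuousLinearMap.mul_apply] using this
    have h2 := hFzero x
    simp only [hFdef] at h2
    rw [if_neg (by simp [hδpos.le] : ¬ δ < ‖z₀ - z₀‖), h1] at h2
    exact h2
  have hθS0 : cfc θ S = 0 := by
    have hfun : ⇑(cfc θ S) = (fun _ : H => (0:H)) :=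
      hdense.equalizer (cfc θ S).continuous continuous_const (funext fun y => hθSι y)
    ext v
    rw [congrFun hfun v]
    rfl
  -- contradiction with z₀ ∈ σ(S)
  have hmap : spectrum ℂ (cfc θ S) = θ '' spectrum ℂ S :=
    cfc_map_spectrum (a := S) (f := θ) ‹IsStarNormal S› hθcont.continuousOn
  have h1 : (1:ℂ) ∈ spectrum ℂ (cfc θ S) := by
    rw [hmap]
    exact ⟨z₀, hz₀, hθz₀⟩
  rw [hθS0, spectrum.mem_iff] at h1
  apply h1
  simp


/-- Let `H` be a Hilbert space, `S` a bounded self-adjoint operator on `H`,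
and let `X ↪ H` be continuously and densely embedded Banach space (embedding `ι`) with
`S (ran ι) ⊆ ran ι`. Then (i) the restriction of `S` to `X` is a bounded operator `A` on `X`;
and (ii) if moreover `σ_ap(A) ⊆ σ(S)`, then `σ(A) = σ(S)`. -/
theorem spectrum_of_restriction_of_selfadjoint
    {H : Type*} [NormedAddCommGroup H] [InnerProductSpace ℂ H] [CompleteSpace H]
    {X : Type*} [NormedAddCommGroup X] [NormedSpace ℂ X] [CompleteSpace X]
    -- the (continuous, injective, densely ranged) embedding X ↪ H
    (ι : X →L[ℂ] H) (hinj : Function.Injective ι) (hdense : DenseRange ι)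
    (S : H →L[ℂ] H) (hS : IsSelfAdjoint S)
    (hSX : ∀ x : X, S (ι x) ∈ Set.range ι) :
    -- (i) the restriction A = S|_X is a bounded operator on X
    (∃ A : X →L[ℂ] X, ∀ x : X, ι (A x) = S (ι x)) ∧
    -- (ii) if σ_ap(A) ⊆ σ(S), then σ(A) = σ(S)
    (∀ A : X →L[ℂ] X, (∀ x : X, ι (A x) = S (ι x)) →
      approxPtSpectrum A ⊆ spectrum ℂ S → spectrum ℂ A = spectrum ℂ S) := by
  have hspec : ∀ x : X, ι ((hSX x).choose) = S (ι x) := fun x => (hSX x).choose_spec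
  set l : X →ₗ[ℂ] X :=
    { toFun := fun x => (hSX x).choose
      map_add' := by
        intro x y
        apply hinj
        rw [map_add ι ((hSX x).choose), hspec, hspec, hspec, map_add]
        exact map_add S _ _
      map_smul' := by
        intro c x
        apply hinj
        rw [RingHom.id_apply, map_smul ι c ((hSX x).choose), hspec, hspec, map_smul]
        exact map_smul S c _ } with hl
  have hlspec : ∀ x : X, ι (l x) = S (ι x) := fun x => hspec x
  have hgraph : IsClosed (l.graph : Set (X × X)) := by
    have heq : (l.graph : Set (X × X)) = {p : X × X | S (ι p.1) = ι p.2} := by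
      ext p
      constructor
      · intro hp
        have h1 : p.2 = l p.1 := (LinearMap.mem_graph_iff l p).mp hp
        have h2 := hlspec p.1
        simp only [Set.mem_setOf_eq]
        rw [h1, ← h2]
      · intro hp
        apply (LinearMap.mem_graph_iff l p).mpr
        apply hinj
        rw [hlspec]
        exact hp.symm
    rw [heq]
    apply isClosed_eq
    · exact S.continuous.comp (ι.continuous.comp continuous_fst)
    · exact ι.continuous.comp continuous_snd
  set A₀ : X →L[ℂ] X := ContinuousLinearMap.ofIsClosedGraph hgraph with hA₀
  have hA₀spec : ∀ x : X, ι (A₀ x) = S (ι x) := by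
    intro x
    have h1 : A₀ x = l x :=
      congrFun (ContinuousLinearMap.coeFn_ofIsClosedGraph hgraph) x
    rw [h1]
    exact hlspec x
  refine ⟨⟨A₀, hA₀spec⟩, ?_⟩
  intro A hA hap
  apply subset_antisymm
  · -- σ(A) ⊆ σ(S)
    have hfr : ∀ w ∈ frontier (spectrum ℂ A), w ∈ spectrum ℂ S :=
      fun w hw => hap (aux_frontier_subset_approx A hw)
    have hSreal : ∀ w ∈ spectrum ℂ S, w.im = 0 := by
      intro w hw
      rw [hS.mem_spectrum_eq_re hw]
      exact Complex.ofReal_im _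
    have hAreal : ∀ w ∈ spectrum ℂ A, w.im = 0 :=
      aux_spectrum_real (spectrum.isClosed A) (spectrum.isBounded A)
        (fun w hw => hSreal w (hfr w hw))
    have hint : interior (spectrum ℂ A) = ∅ := by
      by_contra hc
      obtain ⟨w, hw⟩ := Set.nonempty_iff_ne_empty.mpr hc
      obtain ⟨r, hrpos, hball⟩ := Metric.isOpen_iff.mp isOpen_interior w hw
      have h1 : w + Complex.I * ((r/2 : ℝ) : ℂ) ∈ spectrum ℂ A := by
        apply interior_subset
        apply hball
        rw [Metric.mem_ball, dist_eq_norm]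
        have he : w + Complex.I * ((r/2 : ℝ) : ℂ) - w = Complex.I * ((r/2 : ℝ) : ℂ) := by ring
        rw [he, norm_mul, Complex.norm_I, one_mul, Complex.norm_real, Real.norm_eq_abs,
          abs_of_pos (by positivity)]
        linarith
      have h2 := hAreal _ h1
      have h3 := hAreal w (interior_subset hw)
      simp only [Complex.add_im, Complex.mul_im, Complex.I_re, Complex.I_im,
        Complex.ofReal_re, Complex.ofReal_im, zero_mul, one_mul, mul_zero, add_zero,
        zero_add] at h2
      rw [h3] at h2
      simp at h2
      linarith
    intro w hw
    apply hfr w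
    rw [(spectrum.isClosed (𝕜 := ℂ) A).frontier_eq, hint]
    exact ⟨hw, Set.notMem_empty w⟩
  · exact aux_S_subset_A ι hdense S hS A hA
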